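/- Let d ≥ 0, Δ = 2^d, n ≥ 1, let k ≥ 1 be a power of two, and let a, b : {1,…,n} → {1,…,Δ}² be sequences of points such that the multiset T has at most k distinct points. For each j ∈ {0,…,d}, let (2^j, v_j) be a grid with cell size 2^j and arbitrary shift v_j ∈ {0,…,2^j−1}². Then EMD(a,b) ≤ 2nk + k²·Σ_{j=0}^{d} 2^j·D_{2^j,v_j}(a,b). -/

import Mathlib

open Finset

/-- ℓ1 norm on ℤ². -/
def l1 (p : ℤ × ℤ) : ℤ := |p.1| + |p.2|

/-- Earth-mover distance between the multisets {a 1,…,a n} and {b 1,…,b n}: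
the minimum over permutations σ of ∑ i, ‖a i − b (σ i)‖₁. -/
noncomputable def EMD {n : ℕ} (a b : Fin n → ℤ × ℤ) : ℤ :=
  Finset.univ.inf' Finset.univ_nonempty
    (fun σ : Equiv.Perm (Fin n) => ∑ i, l1 (a i - b (σ i)))

/-- The grid cell of a point p for the grid of cell size L shifted by v
(floor division; `/` on ℤ with positive divisor is floor division). -/
def cell (L : ℕ) (v p : ℤ × ℤ) : ℤ × ℤ :=
  ((p.1 - v.1) / (L : ℤ), (p.2 - v.2) / (L : ℤ))

/-- The grid ℓ1-difference D_{L,v}(a,b) = Σ_{c∈ℤ²} |#{i : cell(a i) = c} − #{i : cell(b i) = c}|,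
where the (finite) sum is taken over the cells actually occupied (all other terms vanish). -/
def D {n : ℕ} (L : ℕ) (v : ℤ × ℤ) (a b : Fin n → ℤ × ℤ) : ℤ :=
  ∑ c ∈ ((Finset.univ.image fun i => cell L v (a i)) ∪
         (Finset.univ.image fun i => cell L v (b i))),
    |((Finset.univ.filter fun i => cell L v (a i) = c).card : ℤ) -
      ((Finset.univ.filter fun i => cell L v (b i) = c).card : ℤ)|


lemma geom2 (t : ℕ) : ∑ j ∈ Finset.range t, (2:ℤ)^(j+1) = 2^(t+1) - 2 := by
  induction t with
  | zero => simp
  | succ t ih => rw [Finset.sum_range_succ, ih]; ring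

lemma coord_close {L : ℕ} (hL : 0 < L) {x y w : ℤ}
    (h : (x - w) / (L:ℤ) = (y - w) / (L:ℤ)) : |x - y| ≤ (L:ℤ) - 1 := by
  have hL' : (0:ℤ) < L := by exact_mod_cast hL
  have hx := Int.mul_ediv_add_emod (x - w) L
  have hy := Int.mul_ediv_add_emod (y - w) L
  have hx1 : 0 ≤ (x - w) % L := Int.emod_nonneg _ (ne_of_gt hL')
  have hx2 : (x - w) % L < L := Int.emod_lt_of_pos _ hL'
  have hy1 : 0 ≤ (y - w) % L := Int.emod_nonneg _ (ne_of_gt hL')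
  have hy2 : (y - w) % L < L := Int.emod_lt_of_pos _ hL'
  have key : x - y = (x - w) % L - (y - w) % L := by
    linear_combination (-1 : ℤ) * hx + hy + (L:ℤ) * h
  rw [abs_le]
  omega

lemma edge_bound (d : ℕ) (v : ℕ → ℤ × ℤ) (p q : ℤ × ℤ)
    (hp1 : 1 ≤ p.1) (hp2 : p.1 ≤ 2^d) (hp3 : 1 ≤ p.2) (hp4 : p.2 ≤ 2^d)
    (hq1 : 1 ≤ q.1) (hq2 : q.1 ≤ 2^d) (hq3 : 1 ≤ q.2) (hq4 : q.2 ≤ 2^d) :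
    l1 (p - q) ≤ ∑ j ∈ Finset.range (d+1),
      if (∃ j' ∈ Finset.range (j+1), cell (2^j') (v j') p = cell (2^j') (v j') q)
      then 0 else (2:ℤ)^(j+1) := by
  classical
  have hl1 : l1 (p - q) = |p.1 - q.1| + |p.2 - q.2| := by
    simp [l1, Prod.fst_sub, Prod.snd_sub]
  by_cases hex : ∃ j', cell (2^j') (v j') p = cell (2^j') (v j') q ∧ j' ≤ d
  · obtain ⟨j₀, hj₀, hj₀d⟩ := hex
    have hfind : ∃ j', cell (2^j') (v j') p = cell (2^j') (v j') q := ⟨j₀, hj₀⟩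
    set ℓ := Nat.find hfind with hℓdef
    have hℓspec : cell (2^ℓ) (v ℓ) p = cell (2^ℓ) (v ℓ) q := Nat.find_spec hfind
    have hℓd : ℓ ≤ d := le_trans (Nat.find_min' hfind hj₀) hj₀d
    have hterm : ∀ j ∈ Finset.range (d+1),
        (if (∃ j' ∈ Finset.range (j+1), cell (2^j') (v j') p = cell (2^j') (v j') q)
         then (0:ℤ) else (2:ℤ)^(j+1)) = if j < ℓ then (2:ℤ)^(j+1) else 0 := by
      intro j _
      by_cases hj : j < ℓ
      · rw [if_pos hj, if_neg]
        rintro ⟨j', hj'mem, hj'eq⟩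
        have : ℓ ≤ j' := Nat.find_min' hfind hj'eq
        simp only [Finset.mem_range] at hj'mem
        omega
      · rw [if_neg hj, if_pos]
        exact ⟨ℓ, Finset.mem_range.mpr (by omega), hℓspec⟩
    rw [Finset.sum_congr rfl hterm]
    have hsum : ∑ j ∈ Finset.range (d+1), (if j < ℓ then (2:ℤ)^(j+1) else 0)
        = ∑ j ∈ Finset.range ℓ, (2:ℤ)^(j+1) := by
      rw [Finset.sum_ite, Finset.sum_const_zero, add_zero]
      congr 1
      ext j
      simp only [Finset.mem_filter, Finset.mem_range]
      omega
    rw [hsum, geom2]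
    have h1 : |p.1 - q.1| ≤ (2:ℤ)^ℓ - 1 := by
      have := congrArg Prod.fst hℓspec
      simp only [cell] at this
      have := coord_close (L := 2^ℓ) (pow_pos (by norm_num) ℓ) this
      calc |p.1 - q.1| ≤ ((2^ℓ : ℕ) : ℤ) - 1 := this
        _ = (2:ℤ)^ℓ - 1 := by push_cast; ring
    have h2 : |p.2 - q.2| ≤ (2:ℤ)^ℓ - 1 := by
      have := congrArg Prod.snd hℓspec
      simp only [cell] at this
      have := coord_close (L := 2^ℓ) (pow_pos (by norm_num) ℓ) this
      calc |p.2 - q.2| ≤ ((2^ℓ : ℕ) : ℤ) - 1 := this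
        _ = (2:ℤ)^ℓ - 1 := by push_cast; ring
    have : (2:ℤ)^(ℓ+1) = 2 * 2^ℓ := by ring
    rw [hl1]
    linarith
  · push_neg at hex
    have hterm : ∀ j ∈ Finset.range (d+1),
        (if (∃ j' ∈ Finset.range (j+1), cell (2^j') (v j') p = cell (2^j') (v j') q)
         then (0:ℤ) else (2:ℤ)^(j+1)) = (2:ℤ)^(j+1) := by
      intro j hj
      rw [if_neg]
      rintro ⟨j', hj'mem, hj'eq⟩
      simp only [Finset.mem_range] at hj'mem hj
      exact absurd hj'eq (by
        intro hcontr
        exact absurd (hex j' hcontr) (by omega))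
    rw [Finset.sum_congr rfl hterm, geom2]
    have h1 : |p.1 - q.1| ≤ (2:ℤ)^d - 1 := abs_le.mpr ⟨by linarith, by linarith⟩
    have h2 : |p.2 - q.2| ≤ (2:ℤ)^d - 1 := abs_le.mpr ⟨by linarith, by linarith⟩
    have hdd : (2:ℤ)^(d+1+1) = 4 * 2^d := by ring
    have hpos : (0:ℤ) < 2^d := pow_pos (by norm_num) d
    rw [hl1]
    linarith



lemma abs_nat_sub (x y : ℕ) : |(x:ℤ) - y| = (x:ℤ) + y - 2 * min (x:ℤ) (y:ℤ) := by
  rcases le_total (x:ℤ) (y:ℤ) with h | h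
  · rw [abs_of_nonpos (by linarith), min_eq_left h]; ring
  · rw [abs_of_nonneg (by linarith), min_eq_right h]; ring


lemma exists_mem_notMem_of_card_lt {α : Type*} {A B : Finset α} (h : A.card < B.card) :
    ∃ x, x ∈ B ∧ x ∉ A := by
  by_contra hall
  push_neg at hall
  exact absurd (Finset.card_le_card fun x hx => hall x hx) (by omega)

lemma matching {n : ℕ} (g h : Fin n → ℤ × ℤ) :
    ∃ τ : Equiv.Perm (Fin n),
      2 * ((univ.filter fun i => ¬ g i = h (τ i)).card : ℤ) ≤
        ∑ c ∈ (univ.image g ∪ univ.image h),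
          |((univ.filter fun i => g i = c).card : ℤ) -
            ((univ.filter fun i => h i = c).card : ℤ)| := by
  classical
  obtain ⟨τ, -, hτmax⟩ := Finset.exists_max_image (univ : Finset (Equiv.Perm (Fin n)))
      (fun τ => (univ.filter fun i => g i = h (τ i)).card) ⟨1, mem_univ 1⟩
  refine ⟨τ, ?_⟩
  set U := (univ.image g ∪ univ.image h) with hU
  have hgU : ∀ i, g i ∈ U := fun i => mem_union_left _ (mem_image_of_mem g (mem_univ i))
  have hhU : ∀ i, h i ∈ U := fun i => mem_union_right _ (mem_image_of_mem h (mem_univ i))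
  -- fiberwise decomposition of the match count
  have hMeq : ∀ ρ : Equiv.Perm (Fin n), (univ.filter fun i => g i = h (ρ i)).card
      = ∑ c ∈ U, (univ.filter fun i => g i = c ∧ h (ρ i) = c).card := by
    intro ρ
    rw [Finset.card_eq_sum_card_fiberwise (f := g) (t := U)
      (fun i hi => hgU i)]
    refine Finset.sum_congr rfl fun c _ => ?_
    congr 1
    ext i
    simp only [Finset.mem_filter, Finset.mem_univ, true_and]
    constructor
    · rintro ⟨h1, h2⟩; exact ⟨h2, h2 ▸ h1.symm⟩
    · rintro ⟨h1, h2⟩; exact ⟨h1.trans h2.symm, h1⟩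
  -- the key claim : sum of mins ≤ max match count
  have hmin : ∑ c ∈ U, min (univ.filter fun i => g i = c).card
      (univ.filter fun i => h i = c).card ≤ (univ.filter fun i => g i = h (τ i)).card := by
    by_contra hlt
    push_neg at hlt
    have hex : ∃ c ∈ U, (univ.filter fun i => g i = c ∧ h (τ i) = c).card
        < min (univ.filter fun i => g i = c).card (univ.filter fun i => h i = c).card := by
      by_contra hall
      push_neg at hall
      have := Finset.sum_le_sum (s := U) (fun c hc => hall c hc)
      rw [← hMeq τ] at this
      omega
    obtain ⟨c, -, hc⟩ := hex
    rw [lt_min_iff] at hc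
    obtain ⟨hcg, hch⟩ := hc
    -- find i : g i = c, h (τ i) ≠ c
    obtain ⟨i, hi1, hi2⟩ := exists_mem_notMem_of_card_lt hcg
    simp only [Finset.mem_filter, Finset.mem_univ, true_and, not_and] at hi1 hi2
    have hi3 : ¬ h (τ i) = c := fun hcon => hi2 hi1 hcon
    -- find i' : h (τ i') = c, g i' ≠ c
    have hch' : (univ.filter fun i => g i = c ∧ h (τ i) = c).card
        < (univ.filter fun i => h (τ i) = c).card := by
      have : (univ.filter fun i => h (τ i) = c).card = (univ.filter fun z => h z = c).card := by
        apply Finset.card_bij' (fun i _ => τ i) (fun z _ => τ.symm z) <;>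
          simp [Finset.mem_filter]
      omega
    obtain ⟨i', hi'1, hi'2⟩ := exists_mem_notMem_of_card_lt hch'
    simp only [Finset.mem_filter, Finset.mem_univ, true_and, not_and] at hi'1 hi'2
    have hi'3 : ¬ g i' = c := fun hcon => hi'2 hcon hi'1
    -- swap
    set τ₂ := τ * Equiv.swap i i' with hτ₂
    have hiS : i ∉ (univ.filter fun x => g x = h (τ x)) := by
      simp only [Finset.mem_filter, Finset.mem_univ, true_and]
      rw [hi1]; exact fun hcon => hi3 hcon.symm
    have hsub : insert i (univ.filter fun x => g x = h (τ x))
        ⊆ (univ.filter fun x => g x = h (τ₂ x)) := by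
      intro x hx
      rcases Finset.mem_insert.mp hx with rfl | hx2
      · simp only [Finset.mem_filter, Finset.mem_univ, true_and, hτ₂,
          Equiv.Perm.mul_apply, Equiv.swap_apply_left]
        rw [hi1, hi'1]
      · have hx' : g x = h (τ x) := (Finset.mem_filter.mp hx2).2
        have hxi : x ≠ i := by rintro rfl; exact hiS hx2
        have hxi' : x ≠ i' := by
          rintro rfl
          exact hi'3 (hx'.trans hi'1)
        simp only [Finset.mem_filter, Finset.mem_univ, true_and, hτ₂,
          Equiv.Perm.mul_apply, Equiv.swap_apply_of_ne_of_ne hxi hxi']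
        exact hx'
    have hcard2 : (univ.filter fun x => g x = h (τ x)).card + 1
        ≤ (univ.filter fun x => g x = h (τ₂ x)).card := by
      have := Finset.card_le_card hsub
      rwa [Finset.card_insert_of_notMem hiS] at this
    have := hτmax τ₂ (mem_univ _)
    omega
  -- final computation
  have hgn : ∑ c ∈ U, (univ.filter fun i => g i = c).card = n := by
    rw [← Finset.card_eq_sum_card_fiberwise (f := g) (t := U) (fun i _ => hgU i)]
    simp
  have hhn : ∑ c ∈ U, (univ.filter fun i => h i = c).card = n := by
    rw [← Finset.card_eq_sum_card_fiberwise (f := h) (t := U) (fun i _ => hhU i)]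
    simp
  have habs : ∑ c ∈ U, |((univ.filter fun i => g i = c).card : ℤ) -
      ((univ.filter fun i => h i = c).card : ℤ)|
      = (2*n : ℤ) - 2 * ∑ c ∈ U, (min (univ.filter fun i => g i = c).card
          (univ.filter fun i => h i = c).card : ℤ) := by
    rw [Finset.sum_congr rfl (fun c _ => abs_nat_sub _ _)]
    rw [Finset.sum_sub_distrib, Finset.sum_add_distrib, ← Finset.mul_sum]
    have h1 : ∑ c ∈ U, ((univ.filter fun i => g i = c).card : ℤ) = (n : ℤ) := by
      rw [← Nat.cast_sum, hgn]
    have h2 : ∑ c ∈ U, ((univ.filter fun i => h i = c).card : ℤ) = (n : ℤ) := by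
      rw [← Nat.cast_sum, hhn]
    have h3 : ∑ c ∈ U, min ((univ.filter fun i => g i = c).card : ℤ)
        ((univ.filter fun i => h i = c).card : ℤ)
        = ∑ c ∈ U, ((min (univ.filter fun i => g i = c).card
            (univ.filter fun i => h i = c).card : ℕ) : ℤ) := by
      refine Finset.sum_congr rfl fun c _ => ?_
      rw [Nat.cast_min]
    rw [h1, h2, h3]
    ring
  have hsplit : (univ.filter fun i => ¬ g i = h (τ i)).card
      + (univ.filter fun i => g i = h (τ i)).card = n := by
    rw [add_comm]
    have := Finset.card_filter_add_card_filter_not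
      (s := (univ : Finset (Fin n))) (p := fun i => g i = h (τ i))
    simpa using this
  rw [habs]
  have hminZ : (∑ c ∈ U, (min (univ.filter fun i => g i = c).card
      (univ.filter fun i => h i = c).card) : ℤ) ≤ ((univ.filter fun i => g i = h (τ i)).card : ℤ) := by
    exact_mod_cast hmin
  push_cast at hminZ ⊢
  have hsplitZ : ((univ.filter fun i => ¬ g i = h (τ i)).card : ℤ)
      + ((univ.filter fun i => g i = h (τ i)).card : ℤ) = (n : ℤ) := by exact_mod_cast hsplit
  linarith



lemma exists_nice {n : ℕ} (b : Fin n → ℤ × ℤ) (ρ₀ : Equiv.Perm (Fin n)) :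
    ∃ ρ' : Equiv.Perm (Fin n), (∀ z, b (ρ' z) = b (ρ₀ z)) ∧
      ∀ z z', ρ'.SameCycle z z' → b z = b z' → z = z' := by
  classical
  suffices H : ∀ N (ρ : Equiv.Perm (Fin n)),
      (univ.filter fun zz : Fin n × Fin n =>
        zz.1 ≠ zz.2 ∧ ρ.SameCycle zz.1 zz.2 ∧ b zz.1 = b zz.2).card ≤ N →
      ∃ ρ' : Equiv.Perm (Fin n), (∀ z, b (ρ' z) = b (ρ z)) ∧
        ∀ z z', ρ'.SameCycle z z' → b z = b z' → z = z' by
    exact H _ ρ₀ le_rfl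
  intro N
  induction N with
  | zero =>
    intro ρ hcard
    refine ⟨ρ, fun z => rfl, fun z z' hsc hbz => ?_⟩
    by_contra hne
    have hm : (z, z') ∈ (univ.filter fun zz : Fin n × Fin n =>
        zz.1 ≠ zz.2 ∧ ρ.SameCycle zz.1 zz.2 ∧ b zz.1 = b zz.2) := by
      simp only [Finset.mem_filter, Finset.mem_univ, true_and]
      exact ⟨hne, hsc, hbz⟩
    have := Finset.card_pos.mpr ⟨_, hm⟩
    omega
  | succ N ih =>
    intro ρ hcard
    by_cases h0 : (univ.filter fun zz : Fin n × Fin n =>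
        zz.1 ≠ zz.2 ∧ ρ.SameCycle zz.1 zz.2 ∧ b zz.1 = b zz.2).card = 0
    · refine ⟨ρ, fun z => rfl, fun z z' hsc hbz => ?_⟩
      by_contra hne
      have hm : (z, z') ∈ (univ.filter fun zz : Fin n × Fin n =>
          zz.1 ≠ zz.2 ∧ ρ.SameCycle zz.1 zz.2 ∧ b zz.1 = b zz.2) := by
        simp only [Finset.mem_filter, Finset.mem_univ, true_and]
        exact ⟨hne, hsc, hbz⟩
      have := Finset.card_pos.mpr ⟨_, hm⟩
      omega
    · obtain ⟨⟨z, z'⟩, hmem⟩ := Finset.card_pos.mp (Nat.pos_of_ne_zero h0)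
      simp only [Finset.mem_filter, Finset.mem_univ, true_and] at hmem
      obtain ⟨hne, hsc, hbzz⟩ := hmem
      set ρ₂ := Equiv.swap z z' * ρ with hρ₂
      have happ : ∀ x, ρ₂ x = Equiv.swap z z' (ρ x) := fun x => rfl
      have hb2 : ∀ x, b (ρ₂ x) = b (ρ x) := by
        intro x
        rw [happ]
        rcases eq_or_ne (ρ x) z with h | h
        · rw [h, Equiv.swap_apply_left]; exact hbzz.symm
        · rcases eq_or_ne (ρ x) z' with h' | h'
          · rw [h', Equiv.swap_apply_right]; exact hbzz
          · rw [Equiv.swap_apply_of_ne_of_ne h h']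
      have hstep : ∀ w, ρ.SameCycle w (ρ₂ w) := by
        intro w
        have hw : ρ.SameCycle w (ρ w) := ⟨1, by simp⟩
        rw [happ]
        rcases eq_or_ne (ρ w) z with h | h
        · rw [h, Equiv.swap_apply_left]
          exact (h ▸ hw).trans hsc
        · rcases eq_or_ne (ρ w) z' with h' | h'
          · rw [h', Equiv.swap_apply_right]
            exact (h' ▸ hw).trans hsc.symm
          · rw [Equiv.swap_apply_of_ne_of_ne h h']
            exact hw
      have hiter : ∀ (t : ℕ) (x : Fin n), ρ.SameCycle x ((ρ₂ ^ t) x) := by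
        intro t
        induction t with
        | zero => intro x; simpa using Equiv.Perm.SameCycle.refl ρ x
        | succ t iht =>
          intro x
          have he : (ρ₂ ^ (t+1)) x = (ρ₂ ^ t) (ρ₂ x) := by
            rw [pow_succ, Equiv.Perm.mul_apply]
          rw [he]
          exact (hstep x).trans (iht (ρ₂ x))
      have hmono : ∀ x y, ρ₂.SameCycle x y → ρ.SameCycle x y := by
        intro x y hxy
        obtain ⟨t, -, ht⟩ := hxy.exists_pow_eq'
        exact ht ▸ hiter t x
      -- the split : z and z' are no longer in the same ρ₂-cycle
      obtain ⟨p, -, hp⟩ := hsc.symm.exists_pow_eq'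
      have hp0 : p ≠ 0 := by
        rintro rfl
        simp at hp
        exact hne hp.symm
      have hPex : ∃ t, (ρ ^ (t+1)) z' = z := ⟨p - 1, by rwa [Nat.sub_add_cancel (by omega)]⟩
      set qm := Nat.find hPex with hqm
      have hq : (ρ ^ (qm+1)) z' = z := Nat.find_spec hPex
      have hqmin : ∀ t, t < qm → (ρ ^ (t+1)) z' ≠ z := fun t ht => Nat.find_min hPex ht
      set B := (Finset.range (qm+1)).image (fun t => (ρ ^ t) z') with hB
      have hz'B : z' ∈ B := by
        refine Finset.mem_image.mpr ⟨0, Finset.mem_range.mpr (by omega), by simp⟩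
      have hzB : z ∉ B := by
        intro hcon
        obtain ⟨t, htm, hteq⟩ := Finset.mem_image.mp hcon
        rcases t with _ | s
        · simp at hteq; exact hne hteq.symm
        · exact hqmin s (by simpa using Finset.mem_range.mp htm) hteq
      have hcl : ∀ w ∈ B, ρ₂ w ∈ B := by
        intro w hw
        obtain ⟨t, htm, rfl⟩ := Finset.mem_image.mp hw
        have htq : t < qm + 1 := Finset.mem_range.mp htm
        have hwnext : ρ ((ρ ^ t) z') = (ρ ^ (t+1)) z' := by
          rw [pow_succ', Equiv.Perm.mul_apply]
        rw [happ, hwnext]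
        set u := (ρ ^ (t+1)) z' with hu
        rcases eq_or_ne u z with hu1 | hu1
        · rw [hu1, Equiv.swap_apply_left]; exact hz'B
        · rcases eq_or_ne u z' with hu2 | hu2
          · -- impossible:早 period
            exfalso
            set r := t + 1 with hr
            have hper0 : (ρ ^ r) z' = z' := by rw [← hu]; exact hu2
            have hper : ∀ s : ℕ, (ρ ^ (s * r)) z' = z' := by
              intro s
              induction s with
              | zero => simp
              | succ s ihs =>
                have hmulr : (s+1) * r = r + s * r := by ring
                rw [hmulr, pow_add, Equiv.Perm.mul_apply, ihs, hper0]
            have hdm : r * ((qm+1) / r) + (qm+1) % r = qm + 1 := Nat.div_add_mod _ _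
            have hzeq : (ρ ^ ((qm+1) % r)) z' = z := by
              have hcomp : (ρ ^ ((qm+1) % r)) ((ρ ^ (((qm+1) / r) * r)) z')
                  = (ρ ^ (qm+1)) z' := by
                rw [← Equiv.Perm.mul_apply, ← pow_add]
                congr 2
                rw [Nat.mul_comm, Nat.add_comm]
                exact hdm
              rw [hper] at hcomp
              rw [hcomp]
              exact hq
            rcases Nat.eq_zero_or_pos ((qm+1) % r) with hz0 | hzpos
            · rw [hz0] at hzeq; simp at hzeq; exact hne hzeq.symm
            · have hlt : (qm+1) % r < r := Nat.mod_lt _ (by omega)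
              obtain ⟨s, hs⟩ : ∃ s, (qm+1) % r = s + 1 := ⟨(qm+1) % r - 1, by omega⟩
              have hslt : s < qm := by omega
              exact hqmin s hslt (by rw [← hs]; exact hzeq)
          · rw [Equiv.swap_apply_of_ne_of_ne hu1 hu2]
            have ht1 : t + 1 < qm + 1 := by
              rcases Nat.lt_or_ge (t+1) (qm+1) with h | h
              · exact h
              · exfalso
                have : t + 1 = qm + 1 := by omega
                rw [this] at hu
                exact hu1 (hu ▸ hq)
            exact Finset.mem_image.mpr ⟨t+1, Finset.mem_range.mpr ht1, rfl⟩
      have hB2 : ∀ t : ℕ, (ρ₂ ^ t) z' ∈ B := by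
        intro t
        induction t with
        | zero => simpa using hz'B
        | succ t iht =>
          have he : (ρ₂ ^ (t+1)) z' = ρ₂ ((ρ₂ ^ t) z') := by
            rw [pow_succ', Equiv.Perm.mul_apply]
          rw [he]
          exact hcl _ iht
      have hsplit : ¬ ρ₂.SameCycle z z' := by
        intro hcon
        obtain ⟨t, -, ht⟩ := hcon.symm.exists_pow_eq'
        exact hzB (ht ▸ hB2 t)
      -- violations strictly decrease
      have hsub : (univ.filter fun zz : Fin n × Fin n =>
          zz.1 ≠ zz.2 ∧ ρ₂.SameCycle zz.1 zz.2 ∧ b zz.1 = b zz.2)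
          ⊆ (univ.filter fun zz : Fin n × Fin n =>
          zz.1 ≠ zz.2 ∧ ρ.SameCycle zz.1 zz.2 ∧ b zz.1 = b zz.2) := by
        intro zz hzz
        simp only [Finset.mem_filter, Finset.mem_univ, true_and] at hzz ⊢
        exact ⟨hzz.1, hmono _ _ hzz.2.1, hzz.2.2⟩
      have hnotin : (z, z') ∉ (univ.filter fun zz : Fin n × Fin n =>
          zz.1 ≠ zz.2 ∧ ρ₂.SameCycle zz.1 zz.2 ∧ b zz.1 = b zz.2) := by
        simp only [Finset.mem_filter, Finset.mem_univ, true_and]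
        rintro ⟨-, hcon, -⟩
        exact hsplit hcon
      have hin : (z, z') ∈ (univ.filter fun zz : Fin n × Fin n =>
          zz.1 ≠ zz.2 ∧ ρ.SameCycle zz.1 zz.2 ∧ b zz.1 = b zz.2) := by
        simp only [Finset.mem_filter, Finset.mem_univ, true_and]
        exact ⟨hne, hsc, hbzz⟩
      have hlt : (univ.filter fun zz : Fin n × Fin n =>
          zz.1 ≠ zz.2 ∧ ρ₂.SameCycle zz.1 zz.2 ∧ b zz.1 = b zz.2).card
          < (univ.filter fun zz : Fin n × Fin n =>
          zz.1 ≠ zz.2 ∧ ρ.SameCycle zz.1 zz.2 ∧ b zz.1 = b zz.2).card := by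
        apply Finset.card_lt_card
        exact (Finset.ssubset_iff_of_subset hsub).mpr ⟨(z, z'), hin, hnotin⟩
      obtain ⟨ρ', hρ'b, hρ'nice⟩ := ih ρ₂ (by omega)
      exact ⟨ρ', fun x => (hρ'b x).trans (hb2 x), hρ'nice⟩



lemma step_lemma {n : ℕ} (b : Fin n → ℤ × ℤ) (Gf : ℕ → Fin n → ℤ × ℤ → Prop)
    [∀ j i p, Decidable (Gf j i p)]
    (hmono : ∀ j j' i p, j ≤ j' → Gf j i p → Gf j' i p)
    (j₀ : ℕ) (σ τ : Equiv.Perm (Fin n)) :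
    ∃ σ'' : Equiv.Perm (Fin n),
      ((univ.filter fun i => ¬ Gf j₀ i (b (σ'' i))).card
          ≤ (univ.image b).card * (univ.filter fun i => ¬ Gf j₀ i (b (τ i))).card)
      ∧ ∀ j, j₀ ≤ j →
          (univ.filter fun i => ¬ Gf j i (b (σ'' i))).card
            ≤ (univ.filter fun i => ¬ Gf j i (b (σ i))).card := by
  classical
  obtain ⟨ρ', hρb, hρnice⟩ := exists_nice b (τ * σ⁻¹)
  set τ' : Equiv.Perm (Fin n) := ρ' * σ with hτ'
  have hτ'b : ∀ i, b (τ' i) = b (τ i) := by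
    intro i
    have h1 : b (ρ' (σ i)) = b ((τ * σ⁻¹) (σ i)) := hρb (σ i)
    have h2 : b (ρ' (σ i)) = b (τ i) := by simpa [Equiv.Perm.mul_apply] using h1
    exact h2
  set Clean : Fin n → Prop := fun z => ∀ y, ρ'.SameCycle z y → Gf j₀ (τ'⁻¹ y) (b y)
    with hClean
  have hCleanInv : ∀ z w, ρ'.SameCycle z w → Clean z → Clean w :=
    fun z w hsc hc y hy => hc y (hsc.trans hy)
  have honestep : ∀ i, ρ'.SameCycle (σ i) (τ' i) := by
    intro i
    have : τ' i = ρ' (σ i) := rfl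
    rw [this]
    exact ⟨1, by simp⟩
  set f : Fin n → Fin n := fun i => if Clean (σ i) then τ' i else σ i with hf
  have hinj : Function.Injective f := by
    intro x y hxy
    simp only [hf] at hxy
    by_cases cx : Clean (σ x) <;> by_cases cy : Clean (σ y)
    · rw [if_pos cx, if_pos cy] at hxy; exact τ'.injective hxy
    · rw [if_pos cx, if_neg cy] at hxy
      exfalso
      exact cy (hxy ▸ hCleanInv (σ x) (τ' x) (honestep x) cx)
    · rw [if_neg cx, if_pos cy] at hxy
      exfalso
      exact cx (hxy ▸ hCleanInv (σ y) (τ' y) (honestep y) cy)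
    · rw [if_neg cx, if_neg cy] at hxy; exact σ.injective hxy
  set σ'' : Equiv.Perm (Fin n) :=
    Equiv.ofBijective f (Finite.injective_iff_bijective.mp hinj) with hσ''
  have happly : ∀ i, σ'' i = f i := fun i => rfl
  have hcleangood : ∀ i, Clean (σ i) → Gf j₀ i (b (τ' i)) := by
    intro i hc
    have h1 := hc (τ' i) (honestep i)
    simpa using h1
  refine ⟨σ'', ?_, ?_⟩
  · -- main count
    have hbadsub : (univ.filter fun i => ¬ Gf j₀ i (b (σ'' i)))
        ⊆ (univ.filter fun i => ¬ Clean (σ i)) := by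
      intro i hi
      simp only [Finset.mem_filter, Finset.mem_univ, true_and] at hi ⊢
      intro hc
      apply hi
      rw [happly i, hf]
      simp only [if_pos hc]
      exact hcleangood i hc
    have hcard1 : (univ.filter fun i => ¬ Clean (σ i)).card
        = (univ.filter fun z => ¬ Clean z).card := by
      apply Finset.card_bij' (fun i _ => σ i) (fun z _ => σ.symm z) <;>
        simp [Finset.mem_filter]
    have hcover : (univ.filter fun z => ¬ Clean z)
        ⊆ (univ.filter fun y => ¬ Gf j₀ (τ'⁻¹ y) (b y)).biUnion
            (fun y => univ.filter fun z => ρ'.SameCycle z y) := by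
      intro z hz
      simp only [Finset.mem_filter, Finset.mem_univ, true_and, hClean] at hz
      push_neg at hz
      obtain ⟨y, hy1, hy2⟩ := hz
      simp only [Finset.mem_biUnion, Finset.mem_filter, Finset.mem_univ, true_and]
      exact ⟨y, hy2, hy1⟩
    have horb : ∀ y, (univ.filter fun z => ρ'.SameCycle z y).card ≤ (univ.image b).card := by
      intro y
      apply Finset.card_le_card_of_injOn b
      · intro z hz
        exact Finset.mem_image_of_mem b (Finset.mem_univ z)
      · intro z hz w hw hbzw
        simp only [Finset.mem_coe, Finset.mem_filter, Finset.mem_univ, true_and] at hz hw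
        exact hρnice z w (hz.trans hw.symm) hbzw
    have hbiu : ((univ.filter fun y => ¬ Gf j₀ (τ'⁻¹ y) (b y)).biUnion
        (fun y => univ.filter fun z => ρ'.SameCycle z y)).card
        ≤ (univ.filter fun y => ¬ Gf j₀ (τ'⁻¹ y) (b y)).card * (univ.image b).card := by
      calc _ ≤ ∑ y ∈ (univ.filter fun y => ¬ Gf j₀ (τ'⁻¹ y) (b y)),
            (univ.filter fun z => ρ'.SameCycle z y).card := Finset.card_biUnion_le
        _ ≤ ∑ y ∈ (univ.filter fun y => ¬ Gf j₀ (τ'⁻¹ y) (b y)), (univ.image b).card :=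
            Finset.sum_le_sum fun y _ => horb y
        _ = _ := by rw [Finset.sum_const, smul_eq_mul]
    have hreidx : (univ.filter fun y => ¬ Gf j₀ (τ'⁻¹ y) (b y)).card
        = (univ.filter fun i => ¬ Gf j₀ i (b (τ i))).card := by
      have : (univ.filter fun y => ¬ Gf j₀ (τ'⁻¹ y) (b y)).card
          = (univ.filter fun i => ¬ Gf j₀ i (b (τ' i))).card := by
        apply Finset.card_bij' (fun y _ => τ'⁻¹ y) (fun i _ => τ' i) <;>
          simp [Finset.mem_filter]
      rw [this]
      congr 1
      apply Finset.filter_congr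
      intro i _
      rw [hτ'b i]
    calc (univ.filter fun i => ¬ Gf j₀ i (b (σ'' i))).card
        ≤ (univ.filter fun i => ¬ Clean (σ i)).card := Finset.card_le_card hbadsub
      _ = (univ.filter fun z => ¬ Clean z).card := hcard1
      _ ≤ _ := Finset.card_le_card hcover
      _ ≤ (univ.filter fun y => ¬ Gf j₀ (τ'⁻¹ y) (b y)).card * (univ.image b).card := hbiu
      _ = (univ.image b).card * (univ.filter fun i => ¬ Gf j₀ i (b (τ i))).card := by
          rw [hreidx, Nat.mul_comm]
  · -- preservation at higher levels
    intro j hj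
    apply Finset.card_le_card
    intro i hi
    simp only [Finset.mem_filter, Finset.mem_univ, true_and] at hi ⊢
    intro hcon
    apply hi
    rw [happly i, hf]
    by_cases hc : Clean (σ i)
    · simp only [if_pos hc]
      exact hmono j₀ j i _ hj (hcleangood i hc)
    · simp only [if_neg hc]
      exact hcon
def Gd {n : ℕ} (a : Fin n → ℤ × ℤ) (v : ℕ → ℤ × ℤ) (j : ℕ) (i : Fin n) (p : ℤ × ℤ) : Prop :=
  ∃ j' ∈ Finset.range (j+1), cell (2^j') (v j') (a i) = cell (2^j') (v j') p

instance {n : ℕ} (a : Fin n → ℤ × ℤ) (v : ℕ → ℤ × ℤ) (j : ℕ) (i : Fin n) (p : ℤ × ℤ) :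
    Decidable (Gd a v j i p) := by unfold Gd; infer_instance

theorem emd_le_grid_diffs (d n k : ℕ) (hn : 1 ≤ n) (hk : ∃ t : ℕ, k = 2 ^ t)
    (a b : Fin n → ℤ × ℤ)
    (ha : ∀ i, 1 ≤ (a i).1 ∧ (a i).1 ≤ 2 ^ d ∧ 1 ≤ (a i).2 ∧ (a i).2 ≤ 2 ^ d)
    (hb : ∀ i, 1 ≤ (b i).1 ∧ (b i).1 ≤ 2 ^ d ∧ 1 ≤ (b i).2 ∧ (b i).2 ≤ 2 ^ d)
    (hT : (Finset.univ.image b).card ≤ k)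
    (v : ℕ → ℤ × ℤ)
    (hv : ∀ j ≤ d, 0 ≤ (v j).1 ∧ (v j).1 < 2 ^ j ∧ 0 ≤ (v j).2 ∧ (v j).2 < 2 ^ j) :
    EMD a b ≤ 2 * n * k +
      (k : ℤ) ^ 2 * ∑ j ∈ Finset.range (d + 1), 2 ^ j * D (2 ^ j) (v j) a b := by
  classical
  set m := (Finset.univ.image b).card with hm
  have hmono : ∀ j j' (i : Fin n) p, j ≤ j' → Gd a v j i p → Gd a v j' i p := by
    rintro j j' i p hjj ⟨j'', hj''m, hj''eq⟩
    exact ⟨j'', Finset.mem_range.mpr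
      (by have := Finset.mem_range.mp hj''m; omega), hj''eq⟩
  -- main construction by downward induction over the levels
  have key : ∀ t, t ≤ d + 1 → ∃ σ : Equiv.Perm (Fin n), ∀ j, d + 1 - t ≤ j → j ≤ d →
      2 * ((univ.filter fun i => ¬ Gd a v j i (b (σ i))).card : ℤ)
        ≤ (m : ℤ) * D (2^j) (v j) a b := by
    intro t
    induction t with
    | zero => exact fun _ => ⟨1, fun j h1 h2 => absurd h1 (by omega)⟩
    | succ t iht =>
      intro ht
      obtain ⟨σt, hσt⟩ := iht (by omega)
      set j₀ := d - t with hj₀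
      obtain ⟨τ, hτ⟩ := matching (fun i => cell (2^j₀) (v j₀) (a i))
          (fun i => cell (2^j₀) (v j₀) (b i))
      have hτD : 2 * ((univ.filter fun i =>
          ¬ cell (2^j₀) (v j₀) (a i) = cell (2^j₀) (v j₀) (b (τ i))).card : ℤ)
          ≤ D (2^j₀) (v j₀) a b := by
        exact hτ
      have hτd : ((univ.filter fun i => ¬ Gd a v j₀ i (b (τ i))).card : ℤ)
          ≤ ((univ.filter fun i =>
            ¬ cell (2^j₀) (v j₀) (a i) = cell (2^j₀) (v j₀) (b (τ i))).card : ℤ) := by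
        have : (univ.filter fun i => ¬ Gd a v j₀ i (b (τ i))).card
            ≤ (univ.filter fun i =>
              ¬ cell (2^j₀) (v j₀) (a i) = cell (2^j₀) (v j₀) (b (τ i))).card := by
          apply Finset.card_le_card
          intro i hi
          simp only [Finset.mem_filter, Finset.mem_univ, true_and] at hi ⊢
          intro hcon
          exact hi ⟨j₀, Finset.mem_range.mpr (by omega), hcon⟩
        exact_mod_cast this
      obtain ⟨σ'', hA, hB⟩ := step_lemma b (Gd a v) hmono j₀ σt τ
      refine ⟨σ'', fun j hj1 hj2 => ?_⟩
      by_cases hjj : j = j₀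
      · subst hjj
        have hAZ : ((univ.filter fun i => ¬ Gd a v j₀ i (b (σ'' i))).card : ℤ)
            ≤ (m:ℤ) * ((univ.filter fun i => ¬ Gd a v j₀ i (b (τ i))).card : ℤ) := by
          exact_mod_cast hA
        have hm0 : (0:ℤ) ≤ (m:ℤ) := Int.natCast_nonneg m
        nlinarith [hτD, hτd, hAZ]
      · have hj1' : d + 1 - t ≤ j := by omega
        have hBj : ((univ.filter fun i => ¬ Gd a v j i (b (σ'' i))).card : ℤ)
            ≤ ((univ.filter fun i => ¬ Gd a v j i (b (σt i))).card : ℤ) := by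
          exact_mod_cast hB j (by omega)
        have := hσt j hj1' hj2
        linarith
  obtain ⟨σ, hσ⟩ := key (d+1) le_rfl
  have hσ' : ∀ j, j ≤ d →
      2 * ((univ.filter fun i => ¬ Gd a v j i (b (σ i))).card : ℤ)
        ≤ (m : ℤ) * D (2^j) (v j) a b := fun j hj => hσ j (by omega) hj
  -- bound the EMD by the chosen permutation
  have h1 : EMD a b ≤ ∑ i, l1 (a i - b (σ i)) :=
    Finset.inf'_le _ (Finset.mem_univ σ)
  have h2 : ∑ i, l1 (a i - b (σ i)) ≤ ∑ i, ∑ j ∈ Finset.range (d+1),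
      (if Gd a v j i (b (σ i)) then 0 else (2:ℤ)^(j+1)) := by
    apply Finset.sum_le_sum
    intro i _
    obtain ⟨ha1, ha2, ha3, ha4⟩ := ha i
    obtain ⟨hb1, hb2, hb3, hb4⟩ := hb (σ i)
    have := edge_bound d v (a i) (b (σ i)) ha1 ha2 ha3 ha4 hb1 hb2 hb3 hb4
    simpa only [Gd] using this
  have h3 : ∑ i, ∑ j ∈ Finset.range (d+1),
      (if Gd a v j i (b (σ i)) then 0 else (2:ℤ)^(j+1))
      = ∑ j ∈ Finset.range (d+1), ∑ i,
        (if Gd a v j i (b (σ i)) then 0 else (2:ℤ)^(j+1)) := Finset.sum_comm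
  have h4 : ∀ j, (∑ i, if Gd a v j i (b (σ i)) then (0:ℤ) else (2:ℤ)^(j+1))
      = 2^(j+1) * ((univ.filter fun i => ¬ Gd a v j i (b (σ i))).card : ℤ) := by
    intro j
    rw [Finset.sum_ite, Finset.sum_const_zero, zero_add, Finset.sum_const, nsmul_eq_mul]
    ring
  have h5 : ∑ j ∈ Finset.range (d+1), ∑ i,
      (if Gd a v j i (b (σ i)) then 0 else (2:ℤ)^(j+1))
      ≤ (m:ℤ) * ∑ j ∈ Finset.range (d + 1), 2 ^ j * D (2 ^ j) (v j) a b := by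
    rw [Finset.mul_sum]
    apply Finset.sum_le_sum
    intro j hj
    have hjd : j ≤ d := by have := Finset.mem_range.mp hj; omega
    have hs := hσ' j hjd
    have hp : (0:ℤ) ≤ 2^j := by positivity
    rw [h4 j]
    calc (2:ℤ)^(j+1) * ((univ.filter fun i => ¬ Gd a v j i (b (σ i))).card : ℤ)
        = 2^j * (2 * ((univ.filter fun i => ¬ Gd a v j i (b (σ i))).card : ℤ)) := by ring
      _ ≤ 2^j * ((m : ℤ) * D (2^j) (v j) a b) := mul_le_mul_of_nonneg_left hs hp
      _ = (m:ℤ) * (2^j * D (2^j) (v j) a b) := by ring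
  have hDpos : (0:ℤ) ≤ ∑ j ∈ Finset.range (d + 1), 2 ^ j * D (2 ^ j) (v j) a b := by
    apply Finset.sum_nonneg
    intro j _
    apply mul_nonneg (by positivity)
    apply Finset.sum_nonneg
    intro c _
    exact abs_nonneg _
  have hk1 : (1:ℤ) ≤ (k:ℤ) := by
    obtain ⟨t, rfl⟩ := hk
    exact_mod_cast Nat.one_le_two_pow
  have hmk : (m:ℤ) ≤ (k:ℤ) := by exact_mod_cast hT
  have hkk : (m:ℤ) ≤ (k:ℤ)^2 := by nlinarith
  have hnn : (0:ℤ) ≤ 2 * (n:ℤ) * (k:ℤ) := by positivity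
  have hfin : (m:ℤ) * ∑ j ∈ Finset.range (d + 1), 2 ^ j * D (2 ^ j) (v j) a b
      ≤ (k:ℤ)^2 * ∑ j ∈ Finset.range (d + 1), 2 ^ j * D (2 ^ j) (v j) a b :=
    mul_le_mul_of_nonneg_right hkk hDpos
  linarith
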